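/- arXiv:1607.01915 — 5 statements merged into one kernel-verified Lean document; each statement's English description precedes it below -/
import Mathlib

section
/- Let θ ∈ (0,1], a > 1, b > 0, set μ = a^{−1/θ}, α = (a−1)/(a+b−1), β = b/(a+b−1), φ(z) = 1 − (a(1−z)^{−θ} + b)^{−1/θ}, and φ_∞(z) = 1 − (1−z)/(α + β(1−z)^{θ})^{1/θ}. Then for all z ∈ [0,1), the Schröder functional equation holds: 1 − φ_∞(φ(z)) = μ (1 − φ_∞(z)). Moreover φ_∞(0) = 0 and φ_∞(z) → 1 as z → 1⁻. -/
open Filter Topology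

theorem schroder_subcritical
    (θ a b : ℝ) (hθ : 0 < θ) (hθ1 : θ ≤ 1) (ha : 1 < a) (hb : 0 < b) :
    let μ : ℝ := a ^ (-1 / θ)
    let α : ℝ := (a - 1) / (a + b - 1)
    let β : ℝ := b / (a + b - 1)
    let φ : ℝ → ℝ := fun z => 1 - (a * (1 - z) ^ (-θ) + b) ^ (-1 / θ)
    let φinf : ℝ → ℝ := fun z => 1 - (1 - z) / (α + β * (1 - z) ^ θ) ^ (1 / θ)
    (∀ z ∈ Set.Ico (0 : ℝ) 1, 1 - φinf (φ z) = μ * (1 - φinf z)) ∧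
      φinf 0 = 0 ∧
      Filter.Tendsto φinf (nhdsWithin 1 (Set.Iio 1)) (nhds 1) := by
  intro μ α β φ φinf
  have hθne : θ ≠ 0 := hθ.ne'
  have hab1 : 0 < a + b - 1 := by linarith
  have hαv : α = (a - 1) / (a + b - 1) := rfl
  have hβv : β = b / (a + b - 1) := rfl
  have hα : 0 < α := by rw [hαv]; exact div_pos (by linarith) hab1
  have hβ : 0 < β := by rw [hβv]; exact div_pos hb hab1
  have hαβ : α + β = 1 := by
    rw [hαv, hβv, ← add_div, div_eq_one_iff_eq hab1.ne']; ring
  have ha0 : 0 < a := by linarith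
  refine ⟨?_, ?_, ?_⟩
  · intro z hz
    obtain ⟨hz0, hz1⟩ := hz
    set u : ℝ := 1 - z with hu_def
    have hu : 0 < u := by simp only [hu_def]; linarith
    set U : ℝ := u ^ (-θ) with hU_def
    have hU : 0 < U := Real.rpow_pos_of_pos hu _
    set S : ℝ := a * U + b with hS_def
    have hS : 0 < S := by positivity
    set T : ℝ := α * U + β with hT_def
    have hT : 0 < T := by positivity
    have hφz : 1 - φ z = S ^ (-1 / θ) := by
      show 1 - (1 - (a * (1 - z) ^ (-θ) + b) ^ (-1 / θ)) = S ^ (-1 / θ)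
      rw [hS_def, hU_def, hu_def]; ring
    -- (S^(-1/θ))^θ = S⁻¹
    have e1 : (S ^ (-1 / θ)) ^ θ = S⁻¹ := by
      rw [← Real.rpow_mul hS.le, show -1 / θ * θ = -1 by field_simp,
        Real.rpow_neg_one]
    -- α + β * S⁻¹ = a * T / S
    have e2 : α + β * S⁻¹ = a * T / S := by
      rw [hT_def, hS_def, hαv, hβv]
      field_simp
      ring
    -- LHS computation
    have lhs_eq : 1 - φinf (φ z) = (a ^ (1 / θ) * T ^ (1 / θ))⁻¹ := by
      have h0 : 1 - φinf (φ z)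
          = (1 - φ z) / (α + β * (1 - φ z) ^ θ) ^ (1 / θ) := by
        show 1 - (1 - (1 - φ z) / (α + β * (1 - φ z) ^ θ) ^ (1 / θ)) = _
        ring
      rw [h0, hφz, e1, e2, Real.div_rpow (by positivity) hS.le,
        Real.mul_rpow ha0.le hT.le]
      rw [div_div_eq_mul_div]
      rw [show S ^ (-1 / θ) * S ^ (1 / θ) = (1 : ℝ) by
        rw [← Real.rpow_add hS, neg_div, one_div, neg_add_cancel, Real.rpow_zero]]
      rw [one_div]
    -- RHS computation
    have hUu : U * u ^ θ = 1 := by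
      rw [hU_def, ← Real.rpow_add hu]; norm_num
    have hden : α + β * u ^ θ = T * u ^ θ := by
      rw [hT_def]; nlinarith [hUu]
    have rhs_eq : 1 - φinf z = (T ^ (1 / θ))⁻¹ := by
      have h0 : 1 - φinf z = u / (α + β * u ^ θ) ^ (1 / θ) := by
        show 1 - (1 - (1 - z) / (α + β * (1 - z) ^ θ) ^ (1 / θ)) = _
        rw [← hu_def]; ring
      rw [h0, hden, Real.mul_rpow hT.le (by positivity),
        ← Real.rpow_mul hu.le, mul_one_div_cancel hθne, Real.rpow_one]
      rw [mul_comm, ← div_div, div_self hu.ne', one_div]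
    rw [lhs_eq, rhs_eq]
    show _ = a ^ (-1 / θ) * _
    rw [mul_inv, show (-1 : ℝ) / θ = -(1 / θ) by ring, Real.rpow_neg ha0.le]
  · show (1 : ℝ) - (1 - 0) / (α + β * (1 - 0) ^ θ) ^ (1 / θ) = 0
    rw [sub_zero, Real.one_rpow, mul_one, hαβ, Real.one_rpow, div_one, sub_self]
  · have h1 : Tendsto (fun z : ℝ => 1 - z) (nhdsWithin 1 (Set.Iio 1)) (nhds 0) := by
      have hc : Continuous (fun z : ℝ => 1 - z) := by continuity
      have := hc.tendsto 1
      norm_num at this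
      exact this.mono_left nhdsWithin_le_nhds
    have h2 : Tendsto (fun z : ℝ => (1 - z) ^ θ) (nhdsWithin 1 (Set.Iio 1)) (nhds 0) := by
      have hc : ContinuousAt (fun x : ℝ => x ^ θ) 0 :=
        Real.continuousAt_rpow_const 0 θ (Or.inr hθ.le)
      have := hc.tendsto.comp h1
      simpa [Function.comp_def, Real.zero_rpow hθne] using this
    have h3 : Tendsto (fun z : ℝ => (α + β * (1 - z) ^ θ) ^ (1 / θ))
        (nhdsWithin 1 (Set.Iio 1)) (nhds (α ^ (1 / θ))) := by
      have hden : Tendsto (fun z : ℝ => α + β * (1 - z) ^ θ)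
          (nhdsWithin 1 (Set.Iio 1)) (nhds α) := by
        have := (tendsto_const_nhds (x := α)).add (h2.const_mul β)
        simpa using this
      have hc : ContinuousAt (fun x : ℝ => x ^ (1 / θ)) α :=
        Real.continuousAt_rpow_const α (1 / θ) (Or.inl hα.ne')
      exact hc.tendsto.comp hden
    have h4 : Tendsto (fun z : ℝ => 1 - (1 - z) / (α + β * (1 - z) ^ θ) ^ (1 / θ))
        (nhdsWithin 1 (Set.Iio 1)) (nhds (1 - 0 / α ^ (1 / θ))) :=
      tendsto_const_nhds.sub (h1.div h3 (Real.rpow_pos_of_pos hα _).ne')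
    have h5 : (1 : ℝ) - 0 / α ^ (1 / θ) = 1 := by simp
    rw [h5] at h4
    exact h4
end

section
/- Let θ ∈ (−1,1] with θ ≠ 0, z_c > 1, a ∈ (0,1), b = (1−a)(z_c−1)^{−θ}, and φ(z) = z_c − (a(z_c−z)^{−θ} + b)^{−1/θ}. Define φ_∞(z) = (1 − (1 − z/z_c)^{−θ})/(1 − (1 − 1/z_c)^{−θ}). Then for all z ∈ [0,1], 1 − φ_∞(φ(z)) = a (1 − φ_∞(z)); moreover φ_∞(0) = 0 and φ_∞(1) = 1. -/
theorem schroder_subcritical_zc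
    (θ zc a : ℝ) (hθl : -1 < θ) (hθr : θ ≤ 1) (hθ0 : θ ≠ 0)
    (hzc : 1 < zc) (ha0 : 0 < a) (ha1 : a < 1) :
    let b : ℝ := (1 - a) * (zc - 1) ^ (-θ)
    let φ : ℝ → ℝ := fun z => zc - (a * (zc - z) ^ (-θ) + b) ^ (-1 / θ)
    let φinf : ℝ → ℝ := fun z =>
      (1 - (1 - z / zc) ^ (-θ)) / (1 - (1 - 1 / zc) ^ (-θ))
    (∀ z ∈ Set.Icc (0 : ℝ) 1, 1 - φinf (φ z) = a * (1 - φinf z)) ∧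
      φinf 0 = 0 ∧ φinf 1 = 1 := by
  intro b φ φinf
  have hzc0 : (0:ℝ) < zc := lt_trans one_pos hzc
  have h1 : (0:ℝ) < zc - 1 := by linarith
  have hu0 : (0:ℝ) < 1 - 1 / zc := by
    rw [sub_pos, div_lt_one hzc0]; exact hzc
  have hu1 : 1 - 1 / zc < 1 := by
    have : 0 < 1 / zc := by positivity
    linarith
  have hDne : 1 - (1 - 1 / zc) ^ (-θ) ≠ 0 := by
    rcases lt_or_gt_of_ne hθ0 with h | h
    · have : (1 - 1 / zc) ^ (-θ) < 1 := Real.rpow_lt_one hu0.le hu1 (by linarith)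
      intro hc; linarith
    · have : 1 < (1 - 1 / zc) ^ (-θ) :=
        (Real.one_lt_rpow_iff_of_pos hu0).mpr (Or.inr ⟨hu1, by linarith⟩)
      intro hc; linarith
  have hzcθ : (0:ℝ) < zc ^ (-θ) := Real.rpow_pos_of_pos hzc0 _
  have heu : 1 - 1 / zc = (zc - 1) / zc := by field_simp
  have heu' : (1 - 1 / zc) ^ (-θ) = (zc - 1) ^ (-θ) / zc ^ (-θ) := by
    rw [heu, Real.div_rpow h1.le hzc0.le]
  refine ⟨?_, ?_, ?_⟩
  · intro z hz
    obtain ⟨hz0, hz1⟩ := hz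
    have hzz : (0:ℝ) < zc - z := by linarith
    have hb : (0:ℝ) < b := by
      have := Real.rpow_pos_of_pos h1 (-θ)
      have : 0 < 1 - a := by linarith
      positivity
    have hA : (0:ℝ) < a * (zc - z) ^ (-θ) + b := by
      have := Real.rpow_pos_of_pos hzz (-θ)
      positivity
    have hφ : 1 - φ z / zc = (a * (zc - z) ^ (-θ) + b) ^ (-1 / θ) / zc := by
      show 1 - (zc - (a * (zc - z) ^ (-θ) + b) ^ (-1 / θ)) / zc = _
      field_simp
      ring
    have hpow : ((a * (zc - z) ^ (-θ) + b) ^ (-1 / θ)) ^ (-θ)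
        = a * (zc - z) ^ (-θ) + b := by
      rw [← Real.rpow_mul hA.le, show -1 / θ * -θ = 1 by field_simp, Real.rpow_one]
    have hφ' : (1 - φ z / zc) ^ (-θ) = (a * (zc - z) ^ (-θ) + b) / zc ^ (-θ) := by
      rw [hφ, Real.div_rpow (Real.rpow_pos_of_pos hA _).le hzc0.le, hpow]
    have hez : 1 - z / zc = (zc - z) / zc := by field_simp
    have hez' : (1 - z / zc) ^ (-θ) = (zc - z) ^ (-θ) / zc ^ (-θ) := by
      rw [hez, Real.div_rpow hzz.le hzc0.le]
    show 1 - (1 - (1 - φ z / zc) ^ (-θ)) / (1 - (1 - 1 / zc) ^ (-θ))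
        = a * (1 - (1 - (1 - z / zc) ^ (-θ)) / (1 - (1 - 1 / zc) ^ (-θ)))
    have hD2 : zc ^ (-θ) - (zc - 1) ^ (-θ) ≠ 0 := by
      rw [heu'] at hDne
      intro hc
      apply hDne
      rw [show (zc - 1) ^ (-θ) = zc ^ (-θ) from by linarith, div_self hzcθ.ne']
      ring
    rw [hφ', hez', heu']
    show 1 - (1 - (a * (zc - z) ^ (-θ) + (1 - a) * (zc - 1) ^ (-θ)) / zc ^ (-θ)) /
          (1 - (zc - 1) ^ (-θ) / zc ^ (-θ)) = _
    field_simp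
    ring
  · show (1 - (1 - 0 / zc) ^ (-θ)) / (1 - (1 - 1 / zc) ^ (-θ)) = 0
    norm_num
  · show (1 - (1 - 1 / zc) ^ (-θ)) / (1 - (1 - 1 / zc) ^ (-θ)) = 1
    exact div_self hDne
end

section
/- Let θ ∈ (0,1], a ∈ (0,1), b > 0 with a + b > 1, and set μ = a^{−1/θ} > 1, α = (1−a)/(a+b−1), β = b/(a+b−1) (so β − α = 1). Define φ(z) = 1 − (a(1−z)^{−θ} + b)^{−1/θ} and φ_W(λ) = 1 − λ α^{1/θ}(β λ^{θ} + 1)^{−1/θ} for λ > 0. Then the Poincaré functional equation φ_W(μλ) = φ(φ_W(λ)) holds for all λ > 0. -/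
open Real

private lemma aux_pow (θ x y z : ℝ) (hθ : 0 < θ) (hx : 0 < x) (hy : 0 < y)
    (hz : 0 < z) :
    x * y ^ (1/θ) * z ^ (-1/θ) = (x ^ θ * y / z) ^ (1/θ) := by
  rw [Real.div_rpow (by positivity) hz.le,
      Real.mul_rpow (by positivity) hy.le, ← Real.rpow_mul hx.le,
      mul_one_div_cancel hθ.ne', Real.rpow_one, neg_div,
      Real.rpow_neg hz.le]
  ring

theorem poincare_equation
    (θ a b : ℝ) (hθ : 0 < θ) (hθ1 : θ ≤ 1) (ha0 : 0 < a) (ha1 : a < 1)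
    (hb : 0 < b) (hab : 1 < a + b) :
    let μ : ℝ := a ^ (-1 / θ)
    let α : ℝ := (1 - a) / (a + b - 1)
    let β : ℝ := b / (a + b - 1)
    let φ : ℝ → ℝ := fun z => 1 - (a * (1 - z) ^ (-θ) + b) ^ (-1 / θ)
    let φW : ℝ → ℝ := fun lam => 1 - lam * α ^ (1 / θ) * (β * lam ^ θ + 1) ^ (-1 / θ)
    ∀ lam : ℝ, 0 < lam → φW (μ * lam) = φ (φW lam) := by
  intro μ α β φ φW lam hlam
  have hθ' : θ ≠ 0 := hθ.ne'
  have hd : 0 < a + b - 1 := by linarith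
  have hα : 0 < α := div_pos (by linarith) hd
  have hβ : 0 < β := div_pos hb hd
  have hs : 0 < lam ^ θ := Real.rpow_pos_of_pos hlam θ
  have hμ : 0 < μ := Real.rpow_pos_of_pos ha0 _
  have hL : 0 < μ * lam := mul_pos hμ hlam
  have hμθ : μ ^ θ = a⁻¹ := by
    show (a ^ (-1/θ)) ^ θ = a⁻¹
    rw [← Real.rpow_mul ha0.le, div_mul_cancel₀ _ hθ', Real.rpow_neg_one]
  have hLθ : (μ * lam) ^ θ = a⁻¹ * lam ^ θ := by
    rw [Real.mul_rpow hμ.le hlam.le, hμθ]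
  -- denominators
  have hz1 : 0 < β * lam ^ θ + 1 := by positivity
  have hz2 : 0 < β * (μ * lam) ^ θ + 1 := by positivity
  set T : ℝ := lam ^ θ * α / (β * lam ^ θ + 1) with hT
  set U : ℝ := (μ * lam) ^ θ * α / (β * (μ * lam) ^ θ + 1) with hU
  have hTpos : 0 < T := div_pos (mul_pos hs hα) hz1
  have hUpos : 0 < U := div_pos (mul_pos (Real.rpow_pos_of_pos hL θ) hα) hz2
  have h1 : 1 - φW lam = T ^ (1/θ) := by
    show 1 - (1 - lam * α ^ (1/θ) * (β * lam ^ θ + 1) ^ (-1/θ)) = T ^ (1/θ)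
    rw [aux_pow θ lam α _ hθ hlam hα hz1]
    rw [hT]
    ring_nf
  have h2 : (1 - φW lam) ^ (-θ) = T⁻¹ := by
    rw [h1, ← Real.rpow_mul hTpos.le, one_div_mul_eq_div, neg_div,
      div_self hθ', Real.rpow_neg_one]
  have h3 : a * T⁻¹ + b = U⁻¹ := by
    rw [hT, hU, hLθ]
    have hα' : α = (1 - a) / (a + b - 1) := rfl
    have hβ' : β = b / (a + b - 1) := rfl
    have h1a : (1:ℝ) - a ≠ 0 := by linarith
    rw [hα', hβ', inv_div, inv_div]
    field_simp
    ring
  have h4 : φ (φW lam) = 1 - U ^ (1/θ) := by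
    show 1 - (a * (1 - φW lam) ^ (-θ) + b) ^ (-1/θ) = 1 - U ^ (1/θ)
    rw [h2, h3, neg_div, Real.rpow_neg (inv_nonneg.mpr hUpos.le),
      Real.inv_rpow hUpos.le, inv_inv]
  have h5 : φW (μ * lam) = 1 - U ^ (1/θ) := by
    show 1 - (μ * lam) * α ^ (1/θ) * (β * (μ * lam) ^ θ + 1) ^ (-1/θ) = _
    rw [aux_pow θ (μ * lam) α _ hθ hL hα hz2]
  rw [h4, h5]
end

section
/- Let θ be a real number and define the sequence g_1 = −θ and g_{m+1} = g_m(m + θ) for m ≥ 1 (i.e., g_m = −θ(1+θ)(2+θ)···(m−1+θ)). Then the partial Bell polynomials B_{k,l}(g_•) satisfy the three-term recursion B_{k+1,l}(g_•) = −θ B_{k,l−1}(g_•) + (k + lθ) B_{k,l}(g_•) for all k, l ≥ 1. -/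
/-- The partial Bell polynomial `B_{k,l}(x_1, x_2, ...)` over `ℝ`:
`(k!/l!)` times the coefficient of `z^k` in `(∑_{j ≥ 1} x_j z^j / j!)^l`. -/
noncomputable def partialBellR (x : ℕ → ℝ) (k l : ℕ) : ℝ :=
  (k.factorial : ℝ) / (l.factorial : ℝ) *
    PowerSeries.coeff (R := ℝ) k
      ((PowerSeries.mk fun j => if j = 0 then 0 else x j / (j.factorial : ℝ)) ^ l)

open PowerSeries

theorem bell_three_term_recursion (θ : ℝ) (g : ℕ → ℝ) (hg1 : g 1 = -θ)
    (hgrec : ∀ m : ℕ, 1 ≤ m → g (m + 1) = g m * ((m : ℝ) + θ)) :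
    ∀ k l : ℕ, 1 ≤ k → 1 ≤ l →
      partialBellR g (k + 1) l =
        -θ * partialBellR g k (l - 1) + ((k : ℝ) + (l : ℝ) * θ) * partialBellR g k l := by
  intro k l hk hl
  set f : ℝ⟦X⟧ := PowerSeries.mk fun j => if j = 0 then 0 else g j / (j.factorial : ℝ) with hf
  have hode : (1 - X) * (d⁄dX ℝ f) = C θ * f - C θ := by
    ext n
    rw [sub_mul, one_mul, map_sub, map_sub]
    cases n with
    | zero =>
        simp [hf, coeff_derivative, hg1, coeff_zero_eq_constantCoeff]
    | succ n =>
        rw [coeff_succ_X_mul, coeff_derivative, coeff_derivative]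
        have hC : (coeff (n + 1)) (C θ) = 0 := by simp [coeff_C]
        rw [coeff_C_mul, hC]
        simp only [hf, coeff_mk, if_neg (Nat.succ_ne_zero _), if_neg (Nat.succ_ne_zero n)]
        rw [hgrec (n + 1) (by omega)]
        have h1 : ((n + 1 + 1).factorial : ℝ) = (n + 1 + 1) * (n + 1).factorial := by
          push_cast [Nat.factorial_succ]; ring
        have h2 : ((n + 1).factorial : ℝ) ≠ 0 := by positivity
        rw [h1]
        field_simp
        push_cast
        ring
  obtain ⟨m, rfl⟩ : ∃ m, k = m + 1 := ⟨k - 1, by omega⟩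
  obtain ⟨j, rfl⟩ : ∃ j, l = j + 1 := ⟨l - 1, by omega⟩
  have hpow : (1 - X) * (d⁄dX ℝ (f ^ (j + 1))) =
      ((j + 1 : ℕ) : ℝ⟦X⟧) * (f ^ j * (C θ * f - C θ)) := by
    rw [Derivation.leibniz_pow]
    simp only [Nat.add_sub_cancel, smul_eq_mul]
    rw [← hode]
    push_cast
    ring
  have hco := congrArg (coeff (m + 1 + 1 - 1)) hpow
  simp only [Nat.add_sub_cancel] at hco
  rw [sub_mul, one_mul, map_sub, coeff_succ_X_mul, coeff_derivative, coeff_derivative] at hco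
  have hsplit : f ^ j * (C θ * f - C θ) = C θ * f ^ (j + 1) - C θ * f ^ j := by
    ring
  rw [hsplit] at hco
  have hnat : ((j + 1 : ℕ) : ℝ⟦X⟧) = C ((j + 1 : ℕ) : ℝ) := by
    simp
  rw [hnat, coeff_C_mul, map_sub, coeff_C_mul, coeff_C_mul] at hco
  -- hco : coeff (m+2) (f^(j+1)) * (m+2) - coeff (m+1) (f^(j+1)) * (m+1)
  --      = (j+1) * (θ * coeff (m+1) (f^(j+1)) - θ * coeff (m+1) (f^j))
  simp only [partialBellR, Nat.add_sub_cancel, ← hf]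
  have hfl : ((j + 1).factorial : ℝ) = (j + 1) * j.factorial := by
    push_cast [Nat.factorial_succ]; ring
  have hfk : ((m + 1 + 1).factorial : ℝ) = (m + 1 + 1) * (m + 1).factorial := by
    push_cast [Nat.factorial_succ]; ring
  have h3 : (j.factorial : ℝ) ≠ 0 := by positivity
  have h4 : ((m + 1).factorial : ℝ) ≠ 0 := by positivity
  push_cast at hco ⊢
  rw [hfl, hfk]
  field_simp
  linear_combination hco
end

section
/- Let z_c ≥ 1, a, b > 0, C = (a + b z_c)^{−1} ∈ (0,1), D^{−1} = aC ∈ (0,1), and φ_c(z) = 1 − (a(1−z)^{−1} + b z_c)^{−1}. Then for all integers i, j ≥ 1, the coefficient of z^j in φ_c(z)^i equals (1−C)^i (1 − D^{−1})^j Σ_{l=1}^{min(i,j)} C(i,l) C(j−1, l−1) [ (C/(1−C)) · (D^{−1}/(1−D^{−1})) ]^l. -/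
open Filter Finset Topology

private lemma hasDerivAt_G (q : ℝ) (k m : ℕ) {z : ℝ} (hz : 1 - q * z ≠ 0) :
    HasDerivAt (fun w : ℝ => w ^ k * ((1 - q * w)⁻¹) ^ m)
      ((k : ℝ) * z ^ (k - 1) * ((1 - q * z)⁻¹) ^ m
        + (m : ℝ) * q * (z ^ k * ((1 - q * z)⁻¹) ^ (m + 1))) z := by
  have h1 : HasDerivAt (fun w : ℝ => 1 - q * w) (-q) z := by
    simpa using ((hasDerivAt_id z).const_mul q).const_sub 1
  have h2 : HasDerivAt (fun w : ℝ => (1 - q * w)⁻¹) (q * ((1 - q * z)⁻¹) ^ 2) z := by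
    have := h1.inv hz
    refine this.congr_deriv ?_
    field_simp
  have h3 : HasDerivAt (fun w : ℝ => ((1 - q * w)⁻¹) ^ m)
      ((m : ℝ) * q * ((1 - q * z)⁻¹) ^ (m + 1)) z := by
    have h := h2.pow m
    refine h.congr_deriv ?_
    rcases m with _ | n
    · simp
    · simp only [Nat.add_sub_cancel]
      push_cast
      ring
  have h4 := (hasDerivAt_pow k z).mul h3
  refine h4.congr_deriv ?_
  ring

private lemma isOpen_U (q : ℝ) : IsOpen {w : ℝ | 1 - q * w ≠ 0} := by
  have hc : Continuous fun w : ℝ => 1 - q * w := by continuity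
  exact isOpen_compl_singleton.preimage hc

private lemma iter_G (q : ℝ) (k m : ℕ) :
    ∀ (j : ℕ) ⦃z : ℝ⦄, 1 - q * z ≠ 0 →
      iteratedDeriv j (fun w : ℝ => w ^ k * ((1 - q * w)⁻¹) ^ m) z =
        ∑ s ∈ Finset.range (j + 1),
          (j.choose s : ℝ) * (k.descFactorial s) * (m.ascFactorial (j - s)) * q ^ (j - s) *
            (z ^ (k - s) * ((1 - q * z)⁻¹) ^ (m + (j - s))) := by
  intro j
  induction j with
  | zero => intro z hz; simp [iteratedDeriv_zero]
  | succ j ih =>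
    intro z hz
    have hmem : {w : ℝ | 1 - q * w ≠ 0} ∈ 𝓝 z := (isOpen_U q).mem_nhds hz
    have ev : iteratedDeriv j (fun w : ℝ => w ^ k * ((1 - q * w)⁻¹) ^ m) =ᶠ[𝓝 z]
        fun w => ∑ s ∈ Finset.range (j + 1),
          (j.choose s : ℝ) * (k.descFactorial s) * (m.ascFactorial (j - s)) * q ^ (j - s) *
            (w ^ (k - s) * ((1 - q * w)⁻¹) ^ (m + (j - s))) :=
      Filter.eventually_of_mem hmem fun w hw => ih hw
    rw [iteratedDeriv_succ, ev.deriv_eq]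
    have hd : HasDerivAt (fun w : ℝ => ∑ s ∈ Finset.range (j + 1),
          (j.choose s : ℝ) * (k.descFactorial s) * (m.ascFactorial (j - s)) * q ^ (j - s) *
            (w ^ (k - s) * ((1 - q * w)⁻¹) ^ (m + (j - s))))
        (∑ s ∈ Finset.range (j + 1),
          (j.choose s : ℝ) * (k.descFactorial s) * (m.ascFactorial (j - s)) * q ^ (j - s) *
            (((k - s : ℕ) : ℝ) * z ^ (k - s - 1) * ((1 - q * z)⁻¹) ^ (m + (j - s))
              + ((m + (j - s) : ℕ) : ℝ) * q *
                (z ^ (k - s) * ((1 - q * z)⁻¹) ^ (m + (j - s) + 1)))) z := by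
      apply HasDerivAt.fun_sum
      intro s _
      exact (hasDerivAt_G q (k - s) (m + (j - s)) hz).const_mul _
    rw [hd.deriv]
    -- now the combinatorial regrouping
    set v : ℝ := (1 - q * z)⁻¹ with hv
    set X : ℕ → ℝ := fun t => (k.descFactorial t : ℝ) * (m.ascFactorial (j + 1 - t)) *
        q ^ (j + 1 - t) * (z ^ (k - t) * v ^ (m + (j + 1 - t))) with hX
    have key : ∀ s ∈ Finset.range (j + 1),
        (j.choose s : ℝ) * (k.descFactorial s) * (m.ascFactorial (j - s)) * q ^ (j - s) *
            (((k - s : ℕ) : ℝ) * z ^ (k - s - 1) * v ^ (m + (j - s))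
              + ((m + (j - s) : ℕ) : ℝ) * q * (z ^ (k - s) * v ^ (m + (j - s) + 1)))
          = (j.choose s : ℝ) * X (s + 1) + (j.choose s : ℝ) * X s := by
      intro s hs
      have hsj : s ≤ j := Nat.lt_succ_iff.mp (Finset.mem_range.mp hs)
      have e1 : j + 1 - (s + 1) = j - s := by omega
      have e2 : k - (s + 1) = k - s - 1 := by omega
      have e3 : j + 1 - s = (j - s) + 1 := by omega
      simp only [hX, e1, e2, e3, Nat.descFactorial_succ, Nat.ascFactorial_succ]
      push_cast
      ring
    rw [Finset.sum_congr rfl key, Finset.sum_add_distrib]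
    have rhs_eq : ∑ t ∈ Finset.range (j + 1 + 1),
        ((j+1).choose t : ℝ) * (k.descFactorial t) * (m.ascFactorial (j + 1 - t)) *
          q ^ (j + 1 - t) * (z ^ (k - t) * v ^ (m + (j + 1 - t)))
        = ∑ t ∈ Finset.range (j + 1 + 1), ((j+1).choose t : ℝ) * X t := by
      apply Finset.sum_congr rfl
      intro t _
      simp only [hX]
      ring
    rw [rhs_eq]
    have split : ∑ t ∈ Finset.range (j + 1 + 1), ((j+1).choose t : ℝ) * X t
        = (∑ s ∈ Finset.range (j + 1), (j.choose s : ℝ) * X (s + 1))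
          + ∑ s ∈ Finset.range (j + 1), (j.choose s : ℝ) * X s := by
      rw [Finset.sum_range_succ' (fun t => ((j+1).choose t : ℝ) * X t) (j + 1)]
      have step1 : ∀ s ∈ Finset.range (j + 1),
          ((j+1).choose (s+1) : ℝ) * X (s + 1)
            = (j.choose s : ℝ) * X (s + 1) + (j.choose (s+1) : ℝ) * X (s + 1) := by
        intro s _
        rw [Nat.choose_succ_succ]
        push_cast
        ring
      rw [Finset.sum_congr rfl step1, Finset.sum_add_distrib]
      have step2 : (∑ s ∈ Finset.range (j + 1), (j.choose (s+1) : ℝ) * X (s + 1))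
            + ((j+1).choose 0 : ℝ) * X 0
          = ∑ s ∈ Finset.range (j + 1), (j.choose s : ℝ) * X s := by
        have := Finset.sum_range_succ' (fun t => (j.choose t : ℝ) * X t) (j + 1)
        simp only [Nat.choose_zero_right] at this ⊢
        rw [← this, Finset.sum_range_succ]
        simp [Nat.choose_succ_self]
      rw [add_assoc, step2]
    rw [split]

private lemma iter_G_zero (q : ℝ) (m j : ℕ) :
    iteratedDeriv j (fun w : ℝ => w ^ m * ((1 - q * w)⁻¹) ^ m) 0 =
      (j.choose m : ℝ) * m.factorial * (m.ascFactorial (j - m)) * q ^ (j - m) := by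
  have h0 : (1 : ℝ) - q * 0 ≠ 0 := by norm_num
  rw [iter_G q m m j h0]
  simp only [mul_zero, sub_zero, inv_one, one_pow, mul_one]
  rw [Finset.sum_eq_single m]
  · rw [Nat.descFactorial_self, Nat.sub_self, pow_zero, mul_one]
  · intro s hs hsm
    rcases lt_or_gt_of_ne hsm with h | h
    · rw [zero_pow (by omega : m - s ≠ 0), mul_zero]
    · rw [Nat.descFactorial_of_lt h]
      push_cast
      ring
  · intro hm
    have : j < m := by
      simp only [Finset.mem_range, not_lt] at hm
      omega
    rw [Nat.choose_eq_zero_of_lt this]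
    push_cast
    ring

private lemma iter_sum (q : ℝ) (K : ℕ → ℝ) (i : ℕ) :
    ∀ (j : ℕ) ⦃z : ℝ⦄, 1 - q * z ≠ 0 →
      iteratedDeriv j (fun w : ℝ =>
          ∑ m ∈ Finset.range (i + 1), K m * (w ^ m * ((1 - q * w)⁻¹) ^ m)) z =
        ∑ m ∈ Finset.range (i + 1),
          K m * iteratedDeriv j (fun w : ℝ => w ^ m * ((1 - q * w)⁻¹) ^ m) z := by
  intro j
  induction j with
  | zero => intro z hz; simp
  | succ j ih =>
    intro z hz
    have hmem : {w : ℝ | 1 - q * w ≠ 0} ∈ 𝓝 z := (isOpen_U q).mem_nhds hz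
    have ev : iteratedDeriv j (fun w : ℝ =>
          ∑ m ∈ Finset.range (i + 1), K m * (w ^ m * ((1 - q * w)⁻¹) ^ m)) =ᶠ[𝓝 z]
        fun w => ∑ m ∈ Finset.range (i + 1),
          K m * iteratedDeriv j (fun w : ℝ => w ^ m * ((1 - q * w)⁻¹) ^ m) w :=
      Filter.eventually_of_mem hmem fun w hw => ih hw
    have hdiff : ∀ m ∈ Finset.range (i + 1),
        DifferentiableAt ℝ (iteratedDeriv j (fun w : ℝ => w ^ m * ((1 - q * w)⁻¹) ^ m)) z := by
      intro m _
      have evm : iteratedDeriv j (fun w : ℝ => w ^ m * ((1 - q * w)⁻¹) ^ m) =ᶠ[𝓝 z]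
          fun w => ∑ s ∈ Finset.range (j + 1),
            (j.choose s : ℝ) * (m.descFactorial s) * (m.ascFactorial (j - s)) * q ^ (j - s) *
              (w ^ (m - s) * ((1 - q * w)⁻¹) ^ (m + (j - s))) :=
        Filter.eventually_of_mem hmem fun w hw => iter_G q m m j hw
      rw [evm.differentiableAt_iff]
      exact (HasDerivAt.fun_sum fun s _ =>
        (hasDerivAt_G q (m - s) (m + (j - s)) hz).const_mul _).differentiableAt
    rw [iteratedDeriv_succ, ev.deriv_eq,
      deriv_fun_sum (fun m hm => ((hdiff m hm).const_mul (K m)))]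
    apply Finset.sum_congr rfl
    intro m hm
    rw [deriv_const_mul (K m) (hdiff m hm), ← iteratedDeriv_succ]

private lemma nat_coeff (j m : ℕ) (hm : 1 ≤ m) (hj : 1 ≤ j) :
    j.choose m * (m.factorial * m.ascFactorial (j - m)) = (j - 1).choose (m - 1) * j.factorial := by
  by_cases h : m ≤ j
  · have h1 : (m - 1).factorial * m.ascFactorial (j - m) = (j - 1).factorial := by
      have := Nat.factorial_mul_ascFactorial' m (j - m) hm
      rwa [show m + (j - m) - 1 = j - 1 by omega] at this
    have h2 : j.choose m * m.factorial * (j - m).factorial = j.factorial :=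
      Nat.choose_mul_factorial_mul_factorial h
    have h3 : (j - 1).choose (m - 1) * (m - 1).factorial * (j - m).factorial
        = (j - 1).factorial := by
      have := Nat.choose_mul_factorial_mul_factorial (show m - 1 ≤ j - 1 by omega)
      rwa [show j - 1 - (m - 1) = j - m by omega] at this
    have hpos : 0 < (m - 1).factorial * (j - m).factorial :=
      Nat.mul_pos (Nat.factorial_pos _) (Nat.factorial_pos _)
    apply Nat.eq_of_mul_eq_mul_right hpos
    calc j.choose m * (m.factorial * m.ascFactorial (j - m))
          * ((m - 1).factorial * (j - m).factorial)
        = (j.choose m * m.factorial * (j - m).factorial)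
            * ((m - 1).factorial * m.ascFactorial (j - m)) := by ring
      _ = j.factorial * (j - 1).factorial := by rw [h2, h1]
      _ = ((j - 1).choose (m - 1) * (m - 1).factorial * (j - m).factorial) * j.factorial := by
            rw [h3]; ring
      _ = (j - 1).choose (m - 1) * j.factorial * ((m - 1).factorial * (j - m).factorial) := by
            ring
  · rw [Nat.choose_eq_zero_of_lt (by omega), Nat.choose_eq_zero_of_lt (by omega)]
    simp

theorem theta_one_transition_entries (zc a b : ℝ) (hzc : 1 ≤ zc) (ha : 0 < a)
    (hb : 0 < b) (habz : 1 < a + b * zc) (haC : a * (a + b * zc)⁻¹ < 1) :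
    let C : ℝ := (a + b * zc)⁻¹
    let Dinv : ℝ := a * C
    let φc : ℝ → ℝ := fun z => 1 - (a * (1 - z)⁻¹ + b * zc)⁻¹
    ∀ i j : ℕ, 1 ≤ i → 1 ≤ j →
      iteratedDeriv j (fun z => (φc z) ^ i) 0 / (j.factorial : ℝ) =
        (1 - C) ^ i * (1 - Dinv) ^ j *
          ∑ l ∈ Finset.Icc 1 (min i j),
            (i.choose l : ℝ) * ((j - 1).choose (l - 1) : ℝ) *
              ((C / (1 - C)) * (Dinv / (1 - Dinv))) ^ l := by
  intro C Dinv φc i j hi hj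
  have hC : C = (a + b * zc)⁻¹ := rfl
  have hD : Dinv = a * C := rfl
  have hφ : φc = fun z => 1 - (a * (1 - z)⁻¹ + b * zc)⁻¹ := rfl
  have hab : (0:ℝ) < a + b * zc := lt_trans one_pos habz
  have hC0 : 0 < C := by rw [hC]; positivity
  have hCsum : C * (a + b * zc) = 1 := by rw [hC]; exact inv_mul_cancel₀ (ne_of_gt hab)
  set q : ℝ := b * zc * C with hq
  have hsum : Dinv + q = 1 := by rw [hD, hq]; linear_combination hCsum
  have hzc0 : (0:ℝ) < zc := lt_of_lt_of_le one_pos hzc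
  have hq0 : 0 < q := by rw [hq]; positivity
  have hDinv0 : 0 < Dinv := by rw [hD]; positivity
  have hα : 0 < 1 - C := by nlinarith [hCsum]
  have hqd : 1 - Dinv = q := by linarith
  set K : ℕ → ℝ := fun m => (i.choose m : ℝ) * (1 - C) ^ (i - m) * (C * Dinv) ^ m with hK
  -- eventual equality near 0
  have hev1 : ∀ᶠ z : ℝ in 𝓝 0, 1 - z ≠ 0 := by
    have hcont : ContinuousAt (fun z : ℝ => 1 - z) 0 := by fun_prop
    exact hcont.eventually_ne (by norm_num)
  have hev2 : ∀ᶠ z : ℝ in 𝓝 0, 1 - q * z ≠ 0 := by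
    have hcont : ContinuousAt (fun z : ℝ => 1 - q * z) 0 := by fun_prop
    exact hcont.eventually_ne (by norm_num)
  have hev3 : ∀ᶠ z : ℝ in 𝓝 0, a * (1 - z)⁻¹ + b * zc ≠ 0 := by
    have hinv : ContinuousAt (fun z : ℝ => (1 - z)⁻¹) 0 :=
      ContinuousAt.inv₀ (by fun_prop) (by norm_num)
    have hcont : ContinuousAt (fun z : ℝ => a * (1 - z)⁻¹ + b * zc) 0 :=
      (hinv.const_mul a).add continuousAt_const
    exact hcont.eventually_ne (by simp; positivity)
  have h_ev : (fun z => (φc z) ^ i) =ᶠ[𝓝 (0:ℝ)]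
      (fun w => ∑ m ∈ Finset.range (i + 1), K m * (w ^ m * ((1 - q * w)⁻¹) ^ m)) := by
    filter_upwards [hev1, hev2, hev3] with z h1 h2 h3
    have hstep : (a * (1 - z)⁻¹ + b * zc)⁻¹ = C * (1 - z) * (1 - q * z)⁻¹ := by
      have e : (a * (1 - z)⁻¹ + b * zc) * (C * (1 - z) * (1 - q * z)⁻¹) = 1 := by
        have h2' : 1 - z * q ≠ 0 := by rwa [mul_comm]
        field_simp
        linear_combination hCsum + z * hq
      exact inv_eq_of_mul_eq_one_right e
    have hφz : φc z = (1 - C) + (C * Dinv) * (z * (1 - q * z)⁻¹) := by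
      rw [hφ]
      simp only
      rw [hstep, hD]
      have h2' : 1 - z * q ≠ 0 := by rwa [mul_comm]
      field_simp
      linear_combination (exp := 1) (- z * C) * hCsum - C * z * hq
    rw [hφz, add_comm, add_pow]
    apply Finset.sum_congr rfl
    intro m _
    simp only [hK]
    rw [mul_pow, mul_pow]
    ring
  rw [h_ev.iteratedDeriv_eq j, iter_sum q K i j (by norm_num : (1:ℝ) - q * 0 ≠ 0)]
  have hterm : ∀ m ∈ Finset.range (i + 1),
      K m * iteratedDeriv j (fun w : ℝ => w ^ m * ((1 - q * w)⁻¹) ^ m) 0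
        = K m * ((j.choose m : ℝ) * m.factorial * (m.ascFactorial (j - m)) * q ^ (j - m)) := by
    intro m _; rw [iter_G_zero]
  rw [Finset.sum_congr rfl hterm, Finset.sum_div]
  have hsub : Finset.Icc 1 i ⊆ Finset.range (i + 1) := by
    intro x hx; simp only [Finset.mem_Icc] at hx; simp only [Finset.mem_range]; omega
  have hzero : ∀ x ∈ Finset.range (i + 1), x ∉ Finset.Icc 1 i →
      K x * ((j.choose x : ℝ) * x.factorial * (x.ascFactorial (j - x)) * q ^ (j - x))
        / (j.factorial : ℝ) = 0 := by
    intro x hx hx'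
    have hx0 : x = 0 := by
      simp only [Finset.mem_range] at hx; simp only [Finset.mem_Icc] at hx'; omega
    subst hx0
    obtain ⟨jj, rfl⟩ : ∃ jj, j = jj + 1 := ⟨j - 1, by omega⟩
    have h0asc : Nat.ascFactorial 0 (jj + 1 - 0) = 0 := by
      simpa using Nat.zero_ascFactorial jj
    rw [h0asc]
    push_cast
    ring
  rw [← Finset.sum_subset hsub hzero]
  -- now handle the RHS
  rw [hqd]
  have hsub2 : Finset.Icc 1 (min i j) ⊆ Finset.Icc 1 i := by
    intro x hx; simp only [Finset.mem_Icc] at hx ⊢; omega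
  have hzero2 : ∀ x ∈ Finset.Icc 1 i, x ∉ Finset.Icc 1 (min i j) →
      (i.choose x : ℝ) * ((j - 1).choose (x - 1) : ℝ)
        * ((C / (1 - C)) * (Dinv / q)) ^ x = 0 := by
    intro x hx hx'
    simp only [Finset.mem_Icc] at hx hx'
    have : j < x := by omega
    rw [Nat.choose_eq_zero_of_lt (by omega : j - 1 < x - 1)]
    push_cast
    ring
  rw [Finset.sum_subset hsub2 hzero2, Finset.mul_sum]
  apply Finset.sum_congr rfl
  intro m hm
  simp only [Finset.mem_Icc] at hm
  by_cases hmj : m ≤ j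
  · have hcoef : (j.choose m : ℝ) * (m.factorial : ℝ) * (m.ascFactorial (j - m) : ℝ)
        = ((j - 1).choose (m - 1) : ℝ) * (j.factorial : ℝ) := by
      rw [mul_assoc]
      exact_mod_cast congrArg (Nat.cast : ℕ → ℝ) (nat_coeff j m hm.1 hj)
    rw [hcoef]
    simp only [hK]
    simp only [mul_pow, div_pow]
    rw [pow_sub₀ (1 - C) (ne_of_gt hα) hm.2, pow_sub₀ q (ne_of_gt hq0) hmj]
    have h1C : (1 - C) ^ m ≠ 0 := pow_ne_zero _ (ne_of_gt hα)
    have hqm : q ^ m ≠ 0 := pow_ne_zero _ (ne_of_gt hq0)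
    have hj' : (j.factorial : ℝ) ≠ 0 := Nat.cast_ne_zero.mpr j.factorial_ne_zero
    field_simp
  · rw [Nat.choose_eq_zero_of_lt (by omega : j < m),
      Nat.choose_eq_zero_of_lt (by omega : j - 1 < m - 1)]
    push_cast
    ring
end
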